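/- Let λ ∈ ℝ, let S : ℝ² → ℝ be C² with |∂_x∂_y S| ≤ M on [x₀ − R, x₀ + R] × I for a bounded interval I ⊆ ℝ with center c, and let a ∈ L^∞(ℝ) be supported in I with ∫_I exp(iλ·S(x₀, y))·a(y) dy = 0. Then for every x ∈ [x₀ − R, x₀ + R], |∫_I exp(iλ·S(x,y))·a(y) dy| ≤ |λ|·M·|x − x₀|·|I|·‖a‖_{L¹}, where |I| is the length of I. -/

import Mathlib

open MeasureTheory

-- phase Lipschitz lemma
lemma phase_lip (lam u v : ℝ) :
    ‖Complex.exp (Complex.I * lam * u) - Complex.exp (Complex.I * lam * v)‖ ≤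
      |lam| * |u - v| := by
  have hd : ∀ t : ℝ, HasDerivAt (fun t : ℝ => Complex.exp (Complex.I * lam * t))
      (Complex.I * lam * Complex.exp (Complex.I * lam * t)) t := by
    intro t
    have h1 : HasDerivAt (fun t : ℝ => (Complex.I * lam) * (t : ℂ)) (Complex.I * lam) t := by
      simpa using ((Complex.ofRealCLM.hasDerivAt (x := t)).const_mul (Complex.I * lam))
    simpa [mul_comm] using (h1.cexp)
  have := Convex.norm_image_sub_le_of_norm_hasDerivWithin_le
    (f := fun t : ℝ => Complex.exp (Complex.I * lam * t))
    (f' := fun t : ℝ => Complex.I * lam * Complex.exp (Complex.I * lam * t))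
    (C := |lam|) (s := Set.univ)
    (fun t _ => (hd t).hasDerivWithinAt)
    (fun t _ => by
      rw [norm_mul, norm_mul]
      simp [Complex.norm_exp, Complex.mul_re])
    convex_univ (Set.mem_univ v) (Set.mem_univ u)
  simpa [Real.norm_eq_abs] using this
open MeasureTheory

lemma double_diff_bound (S : ℝ → ℝ → ℝ)
    (hS : ContDiff ℝ 2 (fun p : ℝ × ℝ => S p.1 p.2))
    (M x₀ R c δ : ℝ)
    (hM : ∀ p ∈ Set.Icc (x₀ - R) (x₀ + R) ×ˢ Set.Icc (c - δ) (c + δ),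
      |deriv (fun x' => deriv (fun y' => S x' y') p.2) p.1| ≤ M)
    (x : ℝ) (hx : x ∈ Set.Icc (x₀ - R) (x₀ + R)) (hx₀ : x₀ ∈ Set.Icc (x₀ - R) (x₀ + R))
    (y : ℝ) (hy : y ∈ Set.Icc (c - δ) (c + δ)) (hc : c ∈ Set.Icc (c - δ) (c + δ))
    (hδ : 0 ≤ δ) :
    |(S x y - S x c) - (S x₀ y - S x₀ c)| ≤ M * |x - x₀| * δ := by
  set f : ℝ × ℝ → ℝ := fun p => S p.1 p.2 with hf
  have hfdiff : Differentiable ℝ f := hS.differentiable (by norm_num)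
  -- slice derivative in y
  have hslice : ∀ t y' : ℝ, HasDerivAt (fun y'' => S t y'') (fderiv ℝ f (t, y') ((0 : ℝ), (1 : ℝ))) y' := by
    intro t y'
    have hinner : HasDerivAt (fun y'' : ℝ => ((t, y'') : ℝ × ℝ)) ((0 : ℝ), (1 : ℝ)) y' :=
      HasDerivAt.prodMk (hasDerivAt_const y' t) (hasDerivAt_id y')
    exact ((hfdiff (t, y')).hasFDerivAt.comp_hasDerivAt y' hinner)
  have hpsi_eq : ∀ t y' : ℝ, deriv (fun y'' => S t y'') y' = fderiv ℝ f (t, y') ((0:ℝ), (1:ℝ)) :=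
    fun t y' => (hslice t y').deriv
  -- ψ_{y'} : t ↦ deriv (fun y'' => S t y'') y' is differentiable
  have hf1 : ContDiff ℝ 1 (fun p => fderiv ℝ f p) := hS.fderiv_right (m := 1) (by norm_num)
  have hpsi_diff : ∀ y' : ℝ, Differentiable ℝ (fun t => deriv (fun y'' => S t y'') y') := by
    intro y'
    have h1 : Differentiable ℝ (fun t : ℝ => fderiv ℝ f (t, y') ((0:ℝ), (1:ℝ))) := by
      have h2 : Differentiable ℝ (fun t : ℝ => fderiv ℝ f (t, y')) :=
        (hf1.differentiable (by norm_num)).comp (differentiable_id.prodMk (differentiable_const y'))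
      exact (ContinuousLinearMap.apply ℝ ℝ ((0:ℝ), (1:ℝ))).differentiable.comp h2
    convert h1 using 2 with t
    exact hpsi_eq t y'
  -- inner MVT: for y' in the interval, |ψ x y' - ψ x₀ y'| ≤ M |x - x₀|
  have hM0 : 0 ≤ M := le_trans (abs_nonneg _) (hM (x₀, c) ⟨hx₀, hc⟩)
  have hinner_mvt : ∀ y' ∈ Set.Icc (c - δ) (c + δ),
      |deriv (fun y'' => S x y'') y' - deriv (fun y'' => S x₀ y'') y'| ≤ M * |x - x₀| := by
    intro y' hy'
    have := Convex.norm_image_sub_le_of_norm_hasDerivWithin_le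
      (f := fun t => deriv (fun y'' => S t y'') y')
      (f' := fun t => deriv (fun t' => deriv (fun y'' => S t' y'') y') t)
      (C := M) (s := Set.Icc (x₀ - R) (x₀ + R))
      (fun t ht => ((hpsi_diff y') t).hasDerivAt.hasDerivWithinAt)
      (fun t ht => hM (t, y') ⟨ht, hy'⟩)
      (convex_Icc _ _) hx₀ hx
    calc |deriv (fun y'' => S x y'') y' - deriv (fun y'' => S x₀ y'') y'|
        ≤ M * ‖x - x₀‖ := this
      _ = M * |x - x₀| := by rw [Real.norm_eq_abs]
  -- outer MVT on φ y' = S x y' - S x₀ y'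
  have hφ := Convex.norm_image_sub_le_of_norm_hasDerivWithin_le
    (f := fun y' => S x y' - S x₀ y')
    (f' := fun y' => deriv (fun y'' => S x y'') y' - deriv (fun y'' => S x₀ y'') y')
    (C := M * |x - x₀|) (s := Set.Icc (c - δ) (c + δ))
    (fun y' _ => (((hslice x y').sub (hslice x₀ y')).congr_deriv
      (by simp [hpsi_eq])).hasDerivWithinAt)
    hinner_mvt (convex_Icc _ _) hc hy
  have hyc : |y - c| ≤ δ := by
    rw [abs_le]; constructor <;> [linarith [hy.1]; linarith [hy.2]]
  calc |(S x y - S x c) - (S x₀ y - S x₀ c)|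
      = |(S x y - S x₀ y) - (S x c - S x₀ c)| := by ring_nf
    _ ≤ M * |x - x₀| * |y - c| := by
        simpa [Real.norm_eq_abs] using hφ
    _ ≤ M * |x - x₀| * δ := by
        apply mul_le_mul_of_nonneg_left hyc (by positivity)

theorem atom_cancellation_estimate (S : ℝ → ℝ → ℝ)
    (hS : ContDiff ℝ 2 (fun p : ℝ × ℝ => S p.1 p.2))
    (lam M x₀ R c δ : ℝ) (hR : 0 < R) (hδ : 0 < δ)
    (a : ℝ → ℂ) (hameas : Measurable a)
    (habd : ∃ Cb : ℝ, ∀ y, ‖a y‖ ≤ Cb)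
    (hsupp : ∀ y, y ∉ Set.Icc (c - δ) (c + δ) → a y = 0)
    (hM : ∀ p ∈ Set.Icc (x₀ - R) (x₀ + R) ×ˢ Set.Icc (c - δ) (c + δ),
      |deriv (fun x' => deriv (fun y' => S x' y') p.2) p.1| ≤ M)
    (hcanc : (∫ y in Set.Icc (c - δ) (c + δ),
      Complex.exp (Complex.I * (lam : ℂ) * ((S x₀ y : ℝ) : ℂ)) * a y) = 0) :
    ∀ x ∈ Set.Icc (x₀ - R) (x₀ + R),
      ‖∫ y in Set.Icc (c - δ) (c + δ),
          Complex.exp (Complex.I * (lam : ℂ) * ((S x y : ℝ) : ℂ)) * a y‖ ≤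
        |lam| * M * |x - x₀| * (2 * δ) * ∫ y, ‖a y‖ := by
  intro x hx
  obtain ⟨Cb, hCb⟩ := habd
  set s : Set ℝ := Set.Icc (c - δ) (c + δ) with hs
  have hx₀ : x₀ ∈ Set.Icc (x₀ - R) (x₀ + R) := by constructor <;> linarith
  have hc : c ∈ s := by constructor <;> linarith
  have hM0 : 0 ≤ M := le_trans (abs_nonneg _) (hM (x₀, c) ⟨hx₀, hc⟩)
  have hsmeas : MeasurableSet s := measurableSet_Icc
  have hsfin : volume s ≠ ⊤ := (measure_Icc_lt_top).ne
  have hScont : Continuous (fun p : ℝ × ℝ => S p.1 p.2) := hS.continuous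
  -- integrability of phase * a on s for any continuous phase
  have hint : ∀ g : ℝ → ℂ, Continuous g → (∀ y, ‖g y‖ ≤ 1) →
      IntegrableOn (fun y => g y * a y) s := by
    intro g hg hg1
    apply Measure.integrableOn_of_bounded hsfin
      ((hg.measurable.mul hameas).aestronglyMeasurable) (M := Cb)
    filter_upwards with y
    calc ‖g y * a y‖ = ‖g y‖ * ‖a y‖ := by
          simp [map_mul]
      _ ≤ 1 * Cb := mul_le_mul (hg1 y) (hCb y) (by positivity) zero_le_one
      _ = Cb := one_mul Cb
  have habs1 : ∀ t : ℝ, ∀ y : ℝ,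
      ‖Complex.exp (Complex.I * lam * ((S t y : ℝ) : ℂ))‖ = 1 := by
    intro t y
    rw [Complex.norm_exp]
    norm_num [Complex.mul_re, Complex.I_re, Complex.I_im, Complex.ofReal_re, Complex.ofReal_im]
  have hphasecont : ∀ t : ℝ, Continuous fun y =>
      Complex.exp (Complex.I * lam * ((S t y : ℝ) : ℂ)) := by
    intro t
    exact Complex.continuous_exp.comp (by
      exact (continuous_const.mul (Complex.continuous_ofReal.comp
        (hScont.comp (Continuous.prodMk_right t)))))
  -- the two phase-difference functions
  set E₁ : ℝ → ℂ := fun y => Complex.exp (Complex.I * lam * (((S x y - S x c : ℝ)) : ℂ)) with hE₁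
  set E₀ : ℝ → ℂ := fun y => Complex.exp (Complex.I * lam * (((S x₀ y - S x₀ c : ℝ)) : ℂ)) with hE₀
  have hEfac : ∀ t : ℝ, ∀ y : ℝ,
      Complex.exp (Complex.I * lam * (((S t y - S t c : ℝ)) : ℂ)) =
        Complex.exp (-(Complex.I * lam * ((S t c : ℝ) : ℂ))) *
          Complex.exp (Complex.I * lam * ((S t y : ℝ) : ℂ)) := by
    intro t y
    rw [← Complex.exp_add]
    congr 1
    push_cast
    ring
  have hE₁cont : Continuous E₁ := by
    rw [hE₁]; simp_rw [hEfac x]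
    exact continuous_const.mul (hphasecont x)
  have hE₀cont : Continuous E₀ := by
    rw [hE₀]; simp_rw [hEfac x₀]
    exact continuous_const.mul (hphasecont x₀)
  have habsE : ∀ t y : ℝ,
      ‖Complex.exp (Complex.I * lam * (((S t y - S t c : ℝ)) : ℂ))‖ = 1 := by
    intro t y
    rw [Complex.norm_exp]
    norm_num [Complex.mul_re, Complex.I_re, Complex.I_im, Complex.ofReal_re, Complex.ofReal_im]
  have hint1 : IntegrableOn (fun y => E₁ y * a y) s := hint E₁ hE₁cont (fun y => (habsE x y).le)
  have hint0 : IntegrableOn (fun y => E₀ y * a y) s := hint E₀ hE₀cont (fun y => (habsE x₀ y).le)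
  -- cancellation: ∫ E₀ a = 0
  have hE0int : (∫ y in s, E₀ y * a y) = 0 := by
    have : ∀ y, E₀ y * a y = Complex.exp (-(Complex.I * lam * ((S x₀ c : ℝ) : ℂ))) *
        (Complex.exp (Complex.I * lam * ((S x₀ y : ℝ) : ℂ)) * a y) := by
      intro y; rw [hE₀]; simp only [hEfac x₀ y]; ring
    simp_rw [this]
    rw [integral_const_mul, hcanc, mul_zero]
  have hE1int : (∫ y in s, E₁ y * a y) =
      Complex.exp (-(Complex.I * lam * ((S x c : ℝ) : ℂ))) *
        ∫ y in s, Complex.exp (Complex.I * lam * ((S x y : ℝ) : ℂ)) * a y := by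
    have : ∀ y, E₁ y * a y = Complex.exp (-(Complex.I * lam * ((S x c : ℝ) : ℂ))) *
        (Complex.exp (Complex.I * lam * ((S x y : ℝ) : ℂ)) * a y) := by
      intro y; rw [hE₁]; simp only [hEfac x y]; ring
    simp_rw [this]
    rw [integral_const_mul]
  have hdiff : (∫ y in s, (E₁ y - E₀ y) * a y) =
      Complex.exp (-(Complex.I * lam * ((S x c : ℝ) : ℂ))) *
        ∫ y in s, Complex.exp (Complex.I * lam * ((S x y : ℝ) : ℂ)) * a y := by
    have : (∫ y in s, (E₁ y - E₀ y) * a y) =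
        (∫ y in s, E₁ y * a y) - ∫ y in s, E₀ y * a y := by
      rw [← integral_sub hint1 hint0]
      congr 1 with y
      ring
    rw [this, hE0int, sub_zero, hE1int]
  -- abs of target equals abs of difference integral
  have habs_eq : ‖∫ y in s, Complex.exp (Complex.I * lam * ((S x y : ℝ) : ℂ)) * a y‖
      = ‖∫ y in s, (E₁ y - E₀ y) * a y‖ := by
    rw [hdiff, norm_mul, Complex.norm_exp]
    norm_num [Complex.mul_re, Complex.I_re, Complex.I_im, Complex.ofReal_re, Complex.ofReal_im]
  rw [habs_eq]
  -- a is integrable (in abs) over ℝ and its integral is over s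
  have hintabs : IntegrableOn (fun y => (‖a y‖ : ℝ)) s := by
    apply Measure.integrableOn_of_bounded hsfin
      ((hameas.norm).aestronglyMeasurable) (M := Cb)
    filter_upwards with y
    have : ‖a y‖ = ‖a y‖ := rfl
    simp only [Real.norm_eq_abs, abs_of_nonneg (norm_nonneg (a y))]
    rw [← this]; exact hCb y
  have habs_int_eq : (∫ y in s, ‖a y‖) = ∫ y, ‖a y‖ := by
    apply setIntegral_eq_integral_of_forall_compl_eq_zero
    intro y hy
    rw [hsupp y hy]
    simp
  have hIa_nonneg : 0 ≤ ∫ y, ‖a y‖ :=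
    integral_nonneg (fun y => norm_nonneg _)
  set K : ℝ := |lam| * (M * |x - x₀| * δ) with hK
  calc ‖∫ y in s, (E₁ y - E₀ y) * a y‖
      ≤ ∫ y in s, ‖(E₁ y - E₀ y) * a y‖ := by
        simpa using
          norm_integral_le_integral_norm (fun y => (E₁ y - E₀ y) * a y)
    _ ≤ ∫ y in s, K * ‖a y‖ := by
        have hsub : IntegrableOn (fun y => (E₁ y - E₀ y) * a y) s := by
          have := hint1.sub hint0
          simpa [sub_mul, Pi.sub_def] using this
        apply setIntegral_mono_on (hsub.norm) (hintabs.const_mul K) hsmeas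
        intro y hy
        rw [norm_mul]
        apply mul_le_mul_of_nonneg_right _ (norm_nonneg _)
        calc ‖E₁ y - E₀ y‖ ≤ |lam| * |(S x y - S x c) - (S x₀ y - S x₀ c)| :=
              phase_lip lam _ _
          _ ≤ |lam| * (M * |x - x₀| * δ) :=
              mul_le_mul_of_nonneg_left
                (double_diff_bound S hS M x₀ R c δ hM x hx hx₀ y hy hc hδ.le)
                (abs_nonneg lam)
    _ = K * ∫ y, ‖a y‖ := by
        rw [integral_const_mul, habs_int_eq]
    _ ≤ |lam| * M * |x - x₀| * (2 * δ) * ∫ y, ‖a y‖ := by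
        apply mul_le_mul_of_nonneg_right _ hIa_nonneg
        rw [hK]
        nlinarith [abs_nonneg lam, abs_nonneg (x - x₀), hδ.le, hM0,
          mul_nonneg (abs_nonneg lam) (mul_nonneg hM0 (abs_nonneg (x - x₀)))]
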